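/- The derivative of the matrix inversion map at an invertible matrix S, acting on symmetric matrices, is the linear map H ↦ −S^{-1} H S^{-1}, and for S positive definite symmetric the determinant of this linear map on the space of m×m symmetric matrices has absolute value det(S)^{−(m+1)}. -/

import Mathlib

attribute [local instance] Matrix.normedAddCommGroup Matrix.normedSpace

/-- The linear map `H ↦ −S⁻¹ H S⁻¹` on matrices. -/
noncomputable def invDerivMap {m : ℕ} (S : Matrix (Fin m) (Fin m) ℝ) :
    Matrix (Fin m) (Fin m) ℝ →ₗ[ℝ] Matrix (Fin m) (Fin m) ℝ where
  toFun H := -(S⁻¹ * H * S⁻¹)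
  map_add' H K := by simp [Matrix.mul_add, Matrix.add_mul, add_comm]
  map_smul' c H := by simp [Matrix.mul_smul, Matrix.smul_mul]

/-- The real vector space of m×m real symmetric matrices. -/
def symSubmodule (m : ℕ) : Submodule ℝ (Matrix (Fin m) (Fin m) ℝ) where
  carrier := {A | A.IsSymm}
  add_mem' := fun ha hb => ha.add hb
  zero_mem' := Matrix.isSymm_zero
  smul_mem' := fun c A hA => by
    simpa [Matrix.IsSymm, Matrix.transpose_smul] using congrArg (c • ·) hA

open Matrix Finset

variable {m : ℕ}

abbrev SymIdx (m : ℕ) := {p : Fin m × Fin m // p.1 ≤ p.2}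

lemma prod_sym_pairs (d : Fin m → ℝ) (hd : ∀ i, 0 < d i) :
    ∏ p : SymIdx m, (d p.1.1 * d p.1.2) = (∏ i, d i) ^ (m + 1) := by
  set f : Fin m × Fin m → ℝ := fun p => d p.1 * d p.2 with hf
  have hP : ∏ p : SymIdx m, (d p.1.1 * d p.1.2)
      = ∏ p ∈ univ.filter (fun p : Fin m × Fin m => p.1 ≤ p.2), f p :=
    (Finset.prod_subtype (univ.filter (fun p : Fin m × Fin m => p.1 ≤ p.2))
      (fun p => by simp) f).symm
  set P := ∏ p ∈ univ.filter (fun p : Fin m × Fin m => p.1 ≤ p.2), f p with hPdef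
  set Q := ∏ p ∈ univ.filter (fun p : Fin m × Fin m => p.1 < p.2), f p with hQdef
  have hsplit : P = (∏ p ∈ univ.filter (fun p : Fin m × Fin m => p.1 = p.2), f p) * Q := by
    rw [hPdef, ← Finset.prod_filter_mul_prod_filter_not
      (univ.filter (fun p : Fin m × Fin m => p.1 ≤ p.2)) (fun p => p.1 = p.2)]
    congr 2
    · ext p
      simp only [Finset.mem_filter, Finset.mem_univ, true_and, and_iff_right_iff_imp]
      exact le_of_eq
    · ext p
      simp only [Finset.mem_filter, Finset.mem_univ, true_and]
      exact ⟨fun ⟨h1, h2⟩ => lt_of_le_of_ne h1 h2, fun h => ⟨h.le, h.ne⟩⟩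
  have hdiag : (∏ p ∈ univ.filter (fun p : Fin m × Fin m => p.1 = p.2), f p)
      = ∏ i, d i ^ 2 := by
    refine Finset.prod_bij' (fun (p : Fin m × Fin m) _ => p.1)
      (fun (i : Fin m) _ => (i, i)) ?_ ?_ ?_ ?_ ?_
    · intro p _; exact mem_univ _
    · intro i _; simp
    · rintro ⟨a, b⟩ hp; simp only [mem_filter, mem_univ, true_and] at hp; simp [hp]
    · intro i _; rfl
    · intro p hp
      simp only [Finset.mem_filter, Finset.mem_univ, true_and] at hp
      rw [hf]; dsimp; rw [← hp, sq]
  have hswap : Q = ∏ p ∈ univ.filter (fun p : Fin m × Fin m => ¬ p.1 ≤ p.2), f p := by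
    rw [hQdef]
    refine Finset.prod_bij' (fun p _ => Prod.swap p) (fun p _ => Prod.swap p) ?_ ?_ ?_ ?_ ?_
    · intro p hp; simp only [mem_filter, mem_univ, true_and] at hp ⊢; simp [not_le, hp]
    · intro p hp; simp only [mem_filter, mem_univ, true_and, not_le] at hp ⊢; exact hp
    · intro p _; simp
    · intro p _; simp
    · intro p hp; rw [hf]; dsimp; ring
  have hall : P * Q = (∏ i, d i) ^ m * (∏ i, d i) ^ m := by
    rw [hswap, hPdef, Finset.prod_filter_mul_prod_filter_not, Fintype.prod_prod_type]
    have : ∀ i : Fin m, ∏ j, f (i, j) = d i ^ m * ∏ j, d j := by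
      intro i
      rw [hf]; dsimp
      rw [Finset.prod_mul_distrib, Finset.prod_const, card_univ, Fintype.card_fin]
    simp_rw [this]
    rw [Finset.prod_mul_distrib, Finset.prod_pow, Finset.prod_const, card_univ,
      Fintype.card_fin]
  have hPpos : 0 < P := by
    rw [hPdef]; exact Finset.prod_pos fun p _ => mul_pos (hd _) (hd _)
  have hdpos : 0 < ∏ i, d i := Finset.prod_pos fun i _ => hd i
  have hPP : P * P = (P * Q) * ∏ i, d i ^ 2 := by
    nth_rewrite 2 [hsplit]
    rw [← hdiag]; ring
  have hsq : P ^ 2 = ((∏ i, d i) ^ (m + 1)) ^ 2 := by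
    rw [sq, hPP, hall, Finset.prod_pow]; ring
  rw [hP]
  nlinarith [pow_pos hdpos (m + 1), sq_nonneg (P - (∏ i, d i) ^ (m + 1))]

/-- Coordinates of a symmetric matrix. -/
noncomputable def symEquivFun (m : ℕ) : symSubmodule m ≃ₗ[ℝ] (SymIdx m → ℝ) where
  toFun A p := A.1 p.1.1 p.1.2
  map_add' A B := rfl
  map_smul' c A := rfl
  invFun f := ⟨Matrix.of (fun i j =>
      if h : i ≤ j then f ⟨(i, j), h⟩ else f ⟨(j, i), le_of_not_ge h⟩), by
    refine Matrix.IsSymm.ext fun i j => ?_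
    rcases le_or_gt i j with h | h
    · rcases eq_or_lt_of_le h with rfl | h'
      · rfl
      · simp only [Matrix.of_apply, dif_pos h, dif_neg (not_le.2 h')]
    · simp only [Matrix.of_apply, dif_pos h.le, dif_neg (not_le.2 h)]⟩
  left_inv A := by
    apply Subtype.ext
    ext i j
    dsimp
    rcases le_or_gt i j with h | h
    · rw [if_pos h]
    · rw [if_neg (not_le.2 h)]
      exact A.2.apply i j
  right_inv f := by
    funext p
    dsimp
    rw [dif_pos p.2]

noncomputable def symBasis (m : ℕ) : Module.Basis (SymIdx m) ℝ (symSubmodule m) :=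
  Module.Basis.ofEquivFun (symEquivFun m)

lemma sym_conj_mem (P : Matrix (Fin m) (Fin m) ℝ) (hP : P.IsSymm)
    (H : Matrix (Fin m) (Fin m) ℝ) (hH : H.IsSymm) : (P * H * P).IsSymm := by
  have : (P * H * P)ᵀ = Pᵀ * Hᵀ * Pᵀ := by
    rw [Matrix.transpose_mul, Matrix.transpose_mul, Matrix.mul_assoc]
  rw [Matrix.IsSymm, this, hP.eq, hH.eq]

/-- Conjugation `H ↦ -(D H D)` by a diagonal matrix, on symmetric matrices. -/
noncomputable def condMap (d : Fin m → ℝ) : symSubmodule m →ₗ[ℝ] symSubmodule m where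
  toFun H := ⟨-(Matrix.diagonal d * H.1 * Matrix.diagonal d),
    ((sym_conj_mem _ (Matrix.isSymm_diagonal d) _ H.2).neg)⟩
  map_add' H K := by
    apply Subtype.ext
    simp [Matrix.mul_add, Matrix.add_mul, add_comm]
  map_smul' c H := by
    apply Subtype.ext
    simp [Matrix.mul_smul, Matrix.smul_mul]

lemma condMap_toMatrix (d : Fin m → ℝ) :
    LinearMap.toMatrix (symBasis m) (symBasis m) (condMap d)
      = Matrix.diagonal (fun p : SymIdx m => -(d p.1.1 * d p.1.2)) := by
  ext p q
  rw [LinearMap.toMatrix_apply]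
  rw [symBasis, Module.Basis.coe_ofEquivFun, Module.Basis.ofEquivFun_repr_apply]
  -- LHS : symEquivFun m (condMap d ((symEquivFun m).symm (Pi.single q 1))) p
  have hentry : ∀ (H : symSubmodule m), symEquivFun m (condMap d H) p
      = -(d p.1.1 * (symEquivFun m H) p * d p.1.2) := by
    intro H
    show (-(Matrix.diagonal d * H.1 * Matrix.diagonal d)) p.1.1 p.1.2
      = -(d p.1.1 * H.1 p.1.1 p.1.2 * d p.1.2)
    simp [Matrix.diagonal_mul, Matrix.mul_diagonal]
  rw [hentry, LinearEquiv.apply_symm_apply]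
  rcases eq_or_ne p q with rfl | hpq
  · simp [Matrix.diagonal_apply_eq, Pi.single_eq_same]
  · simp [Matrix.diagonal_apply_ne _ hpq, Pi.single_eq_of_ne hpq]

lemma condMap_det (d : Fin m → ℝ) (hd : ∀ i, 0 < d i) :
    |LinearMap.det (condMap d)| = (∏ i, d i) ^ (m + 1) := by
  rw [← LinearMap.det_toMatrix (symBasis m), condMap_toMatrix, Matrix.det_diagonal,
    Finset.abs_prod]
  rw [← prod_sym_pairs d hd]
  exact Finset.prod_congr rfl fun p _ => by
    rw [abs_neg, abs_of_pos (mul_pos (hd _) (hd _))]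

lemma conj_mem (Q H : Matrix (Fin m) (Fin m) ℝ) (hH : H.IsSymm) : (Q * H * Qᵀ).IsSymm := by
  rw [Matrix.IsSymm, Matrix.transpose_mul, Matrix.transpose_mul, Matrix.transpose_transpose,
    hH.eq, Matrix.mul_assoc]

/-- Conjugation by an orthogonal matrix as a linear equivalence of symmetric matrices. -/
noncomputable def conjEquiv (Q : Matrix (Fin m) (Fin m) ℝ)
    (h1 : Q * Qᵀ = 1) (h2 : Qᵀ * Q = 1) : symSubmodule m ≃ₗ[ℝ] symSubmodule m where
  toFun H := ⟨Q * H.1 * Qᵀ, conj_mem Q H.1 H.2⟩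
  invFun H := ⟨Qᵀ * H.1 * Q, by
    simpa [symSubmodule] using conj_mem Qᵀ H.1 H.2⟩
  map_add' H K := by apply Subtype.ext; simp [Matrix.mul_add, Matrix.add_mul]
  map_smul' c H := by apply Subtype.ext; simp [Matrix.mul_smul, Matrix.smul_mul]
  left_inv H := by
    apply Subtype.ext
    show Qᵀ * (Q * H.1 * Qᵀ) * Q = H.1
    calc Qᵀ * (Q * H.1 * Qᵀ) * Q = (Qᵀ * Q) * H.1 * (Qᵀ * Q) := by
          simp only [Matrix.mul_assoc]
      _ = H.1 := by rw [h2]; simp [Matrix.mul_assoc]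
  right_inv H := by
    apply Subtype.ext
    show Q * (Qᵀ * H.1 * Q) * Qᵀ = H.1
    calc Q * (Qᵀ * H.1 * Q) * Qᵀ = (Q * Qᵀ) * H.1 * (Q * Qᵀ) := by
          simp only [Matrix.mul_assoc]
      _ = H.1 := by rw [h1]; simp [Matrix.mul_assoc]

lemma part2 (m : ℕ) (S : Matrix (Fin m) (Fin m) ℝ) (hS : S.PosDef)
    (L : symSubmodule m →ₗ[ℝ] symSubmodule m)
    (hL : ∀ H : symSubmodule m, (L H : Matrix (Fin m) (Fin m) ℝ) = -(S⁻¹ * H * S⁻¹)) :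
    |LinearMap.det L| = S.det ^ (-(m + 1 : ℤ)) := by
  have hHerm : S.IsHermitian := hS.1
  set U : Matrix (Fin m) (Fin m) ℝ := (hHerm.eigenvectorUnitary : Matrix (Fin m) (Fin m) ℝ) with hUdef
  set lam : Fin m → ℝ := hHerm.eigenvalues with hlam
  have hlam_pos : ∀ i, 0 < lam i := fun i => hS.eigenvalues_pos i
  have hstarU : star U = Uᵀ := by
    rw [Matrix.star_eq_conjTranspose, Matrix.conjTranspose_eq_transpose_of_trivial]
  have h1 : U * Uᵀ = 1 := by
    rw [← hstarU]
    exact (Matrix.mem_unitaryGroup_iff).mp hHerm.eigenvectorUnitary.2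
  have h2 : Uᵀ * U = 1 := by
    rw [← hstarU]
    exact (Matrix.mem_unitaryGroup_iff').mp hHerm.eigenvectorUnitary.2
  have hspec : S = U * Matrix.diagonal lam * Uᵀ := by
    rw [← hstarU]
    simpa using hHerm.spectral_theorem
  have hSinv : S⁻¹ = U * Matrix.diagonal (fun i => (lam i)⁻¹) * Uᵀ := by
    apply Matrix.inv_eq_left_inv
    calc U * Matrix.diagonal (fun i => (lam i)⁻¹) * Uᵀ * S
        = U * (Matrix.diagonal (fun i => (lam i)⁻¹) * (Uᵀ * U) * Matrix.diagonal lam) * Uᵀ := by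
          rw [hspec]; simp only [Matrix.mul_assoc]
      _ = 1 := by
          rw [h2, Matrix.mul_one, Matrix.diagonal_mul_diagonal]
          have : (fun i => (lam i)⁻¹ * lam i) = fun _ => (1 : ℝ) := by
            funext i; exact inv_mul_cancel₀ (hlam_pos i).ne'
          rw [this, Matrix.diagonal_one, Matrix.mul_one, h1]
  set cU := conjEquiv U h1 h2 with hcU
  have hLconj : L = (cU : symSubmodule m →ₗ[ℝ] symSubmodule m)
      ∘ₗ (condMap (fun i => (lam i)⁻¹)) ∘ₗ (cU.symm : symSubmodule m →ₗ[ℝ] symSubmodule m) := by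
    refine LinearMap.ext fun H => Subtype.ext ?_
    show (L H : Matrix (Fin m) (Fin m) ℝ)
      = U * (-(Matrix.diagonal (fun i => (lam i)⁻¹) * (Uᵀ * H.1 * U)
          * Matrix.diagonal (fun i => (lam i)⁻¹))) * Uᵀ
    rw [hL, hSinv]
    simp only [Matrix.mul_neg, Matrix.neg_mul, neg_inj, Matrix.mul_assoc]
  have hdet : LinearMap.det L = LinearMap.det (condMap (fun i => (lam i)⁻¹)) := by
    rw [hLconj]
    exact LinearMap.det_conj _ cU
  rw [hdet, condMap_det _ (fun i => inv_pos.2 (hlam_pos i))]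
  have hdetS : S.det = ∏ i, lam i := by simpa using hHerm.det_eq_prod_eigenvalues
  rw [hdetS, Finset.prod_inv_distrib, inv_pow, ← zpow_natCast (∏ i, lam i) (m + 1), ← _root_.zpow_neg]
  push_cast
  ring_nf

lemma matrix_norm_mul_le (X Y : Matrix (Fin m) (Fin m) ℝ) :
    ‖X * Y‖ ≤ m * ‖X‖ * ‖Y‖ := by
  refine (Matrix.norm_le_iff (by positivity)).2 fun i j => ?_
  rw [Matrix.mul_apply]
  calc ‖∑ k, X i k * Y k j‖ ≤ ∑ k, ‖X i k * Y k j‖ := norm_sum_le _ _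
    _ ≤ ∑ _k : Fin m, ‖X‖ * ‖Y‖ := Finset.sum_le_sum fun k _ => by
        rw [norm_mul]
        exact mul_le_mul (Matrix.norm_entry_le_entrywise_sup_norm X)
          (Matrix.norm_entry_le_entrywise_sup_norm Y) (norm_nonneg _) (norm_nonneg _)
    _ = m * ‖X‖ * ‖Y‖ := by
        rw [Finset.sum_const, Finset.card_univ, Fintype.card_fin, nsmul_eq_mul, mul_assoc]

lemma part1 (m : ℕ) (S : Matrix (Fin m) (Fin m) ℝ) (hS : S.PosDef) :
    HasFDerivAt (fun A : Matrix (Fin m) (Fin m) ℝ => A⁻¹)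
      (LinearMap.toContinuousLinearMap (invDerivMap S)) S := by
  have hdet : S.det ≠ 0 := hS.det_pos.ne'
  have hdetU : IsUnit S.det := hdet.isUnit
  have hSS : S * S⁻¹ = 1 := Matrix.mul_nonsing_inv S hdetU
  have hSS' : S⁻¹ * S = 1 := Matrix.nonsing_inv_mul S hdetU
  refine hasFDerivAt_iff_isLittleO.2 ?_
  rw [Asymptotics.isLittleO_iff]
  intro ε hε
  -- continuity facts
  have hdetcont : ContinuousAt (fun A : Matrix (Fin m) (Fin m) ℝ => A.det) S :=
    Continuous.continuousAt (continuous_id.matrix_det)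
  have hinvcont : ContinuousAt (fun A : Matrix (Fin m) (Fin m) ℝ => A⁻¹) S := by
    apply continuousAt_matrix_inv
    rw [Ring.inverse_eq_inv']
    exact continuousAt_inv₀ hdet
  set C : ℝ := (m : ℝ) * ((m : ℝ) * ‖S⁻¹‖) + 1 with hCdef
  have hC : 0 < C := by positivity
  set δ : ℝ := ε / C with hδdef
  have hδ : 0 < δ := div_pos hε hC
  have hδC : δ * C = ε := div_mul_cancel₀ _ hC.ne'
  have ev1 : ∀ᶠ A : Matrix (Fin m) (Fin m) ℝ in nhds S, A.det ≠ 0 :=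
    hdetcont.eventually_ne hdet
  have ev2 : ∀ᶠ A : Matrix (Fin m) (Fin m) ℝ in nhds S, ‖S⁻¹ - A⁻¹‖ < δ := by
    have ht : Filter.Tendsto (fun A : Matrix (Fin m) (Fin m) ℝ => ‖S⁻¹ - A⁻¹‖)
        (nhds S) (nhds ‖S⁻¹ - S⁻¹‖) := ((tendsto_const_nhds.sub hinvcont).norm)
    rw [sub_self, norm_zero] at ht
    exact ht.eventually_lt_const hδ
  filter_upwards [ev1, ev2] with A hA1 hA2
  have hAA : A * A⁻¹ = 1 := Matrix.mul_nonsing_inv A hA1.isUnit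
  have hApp : (LinearMap.toContinuousLinearMap (invDerivMap S)) (A - S)
      = -(S⁻¹ * (A - S) * S⁻¹) := rfl
  erw [hApp, sub_neg_eq_add]
  have e1 : S⁻¹ * (A - S) * A⁻¹ = S⁻¹ - A⁻¹ := by
    calc S⁻¹ * (A - S) * A⁻¹ = S⁻¹ * (A * A⁻¹) - S⁻¹ * S * A⁻¹ := by
          rw [Matrix.mul_sub, Matrix.sub_mul, Matrix.mul_assoc]
      _ = S⁻¹ - A⁻¹ := by rw [hAA, hSS', Matrix.mul_one, Matrix.one_mul]
  have hres : A⁻¹ - S⁻¹ + S⁻¹ * (A - S) * S⁻¹ = S⁻¹ * (A - S) * (S⁻¹ - A⁻¹) := by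
    rw [Matrix.mul_sub (S⁻¹ * (A - S)) S⁻¹ A⁻¹, e1]
    abel
  rw [hres]
  have b1 : ‖S⁻¹ * (A - S) * (S⁻¹ - A⁻¹)‖
      ≤ (m : ℝ) * ‖S⁻¹ * (A - S)‖ * ‖S⁻¹ - A⁻¹‖ := matrix_norm_mul_le _ _
  have b2 : ‖S⁻¹ * (A - S)‖ ≤ (m : ℝ) * ‖S⁻¹‖ * ‖A - S‖ := matrix_norm_mul_le _ _
  have b3 : (m : ℝ) * ‖S⁻¹ * (A - S)‖ * ‖S⁻¹ - A⁻¹‖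
      ≤ (m : ℝ) * ((m : ℝ) * ‖S⁻¹‖ * ‖A - S‖) * δ := by
    have h0 : (0:ℝ) ≤ (m : ℝ) := Nat.cast_nonneg m
    exact mul_le_mul (mul_le_mul_of_nonneg_left b2 h0) hA2.le (norm_nonneg _) (by positivity)
  refine (b1.trans b3).trans ?_
  have : (m : ℝ) * ((m : ℝ) * ‖S⁻¹‖ * ‖A - S‖) * δ = ((C - 1) * δ) * ‖A - S‖ := by
    rw [hCdef]; ring
  rw [this]
  have hkey : (C - 1) * δ ≤ ε := by nlinarith [hδC]
  exact mul_le_mul_of_nonneg_right hkey (norm_nonneg _)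

/-- The derivative of matrix inversion at an invertible S is `H ↦ −S⁻¹ H S⁻¹`; for
S positive definite symmetric, the determinant of this linear map restricted to the
space of symmetric matrices has absolute value `det(S)^{−(m+1)}`. -/
theorem fderiv_inv_and_det (m : ℕ) (S : Matrix (Fin m) (Fin m) ℝ)
    (hSym : S.IsSymm) (hS : S.PosDef) :
    HasFDerivAt (fun A : Matrix (Fin m) (Fin m) ℝ => A⁻¹)
      (LinearMap.toContinuousLinearMap (invDerivMap S)) S ∧
    ∀ L : symSubmodule m →ₗ[ℝ] symSubmodule m,
      (∀ H : symSubmodule m,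
        (L H : Matrix (Fin m) (Fin m) ℝ) = -(S⁻¹ * H * S⁻¹)) →
      |LinearMap.det L| = S.det ^ (-(m + 1 : ℤ)) := by
  exact ⟨part1 m S hS, fun L hL => part2 m S hS L hL⟩
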